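/- The function V(x) = |x|²(sin(e^{|x|}) + 2) + 1 on ℝ² does not satisfy the bound |∇V(x)| ≤ C·V(x)^{3/2} for any constant C: there is a sequence x_n with |x_n| → ∞ such that |∇V(x_n)|/V(x_n)^{3/2} → ∞. -/

import Mathlib

open Real Filter

noncomputable section

local notation "E2" => EuclideanSpace ℝ (Fin 2)

lemma norm_hasFDerivAt_aux (x : EuclideanSpace ℝ (Fin 2)) (hx : x ≠ 0) :
    HasFDerivAt (fun y : EuclideanSpace ℝ (Fin 2) => ‖y‖) (‖x‖⁻¹ • innerSL ℝ x) x := by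
  have hsq : HasFDerivAt (fun y : E2 => ‖y‖ ^ 2)
      ((fderivInnerCLM ℝ (x, x)).comp
        ((ContinuousLinearMap.id ℝ E2).prod (ContinuousLinearMap.id ℝ E2))) x := by
    have h := (hasFDerivAt_id x).inner ℝ (hasFDerivAt_id x)
    have he : (fun y : E2 => ‖y‖ ^ 2) = fun y : E2 => (inner ℝ y y : ℝ) := by
      funext y; exact (real_inner_self_eq_norm_sq y).symm
    rw [he]
    exact h
  have hnz : ‖x‖ ^ 2 ≠ 0 := pow_ne_zero _ (norm_ne_zero_iff.mpr hx)
  have hs := (Real.hasDerivAt_sqrt hnz).comp_hasFDerivAt x hsq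
  have he : (fun y : E2 => Real.sqrt (‖y‖ ^ 2)) = fun y : E2 => ‖y‖ := by
    funext y; rw [Real.sqrt_sq (norm_nonneg y)]
  rw [Function.comp_def] at hs
  rw [he] at hs
  refine hs.congr_fderiv ?_
  symm
  ext v
  have hxn : ‖x‖ ≠ 0 := norm_ne_zero_iff.mpr hx
  simp only [ContinuousLinearMap.smul_apply, innerSL_apply_apply, Real.sqrt_sq (norm_nonneg x),
    ContinuousLinearMap.coe_comp', Function.comp_apply, ContinuousLinearMap.prod_apply,
    ContinuousLinearMap.coe_id', id_eq, fderivInnerCLM_apply, smul_eq_mul]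
  rw [real_inner_comm v x]
  field_simp
  ring

lemma phi_hasDerivAt_aux (r : ℝ) :
    HasDerivAt (fun t : ℝ => t ^ 2 * (Real.sin (Real.exp t) + 2) + 1)
      (2 * r * (Real.sin (Real.exp r) + 2) + r ^ 2 * (Real.exp r * Real.cos (Real.exp r))) r := by
  have h1 : HasDerivAt (fun t : ℝ => Real.sin (Real.exp t) + 2)
      (Real.exp r * Real.cos (Real.exp r)) r := by
    have := (Real.hasDerivAt_sin (Real.exp r)).comp r (Real.hasDerivAt_exp r)
    simpa [mul_comm] using this.add_const 2
  have h2 : HasDerivAt (fun t : ℝ => t ^ 2) (2 * r) r := by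
    simpa using hasDerivAt_pow 2 r
  exact (h2.mul h1).add_const 1

lemma grad_V_aux (x : EuclideanSpace ℝ (Fin 2)) (hx : x ≠ 0) :
    gradient (fun y : EuclideanSpace ℝ (Fin 2) =>
        ‖y‖ ^ 2 * (Real.sin (Real.exp ‖y‖) + 2) + 1) x
      = (((2 * ‖x‖ * (Real.sin (Real.exp ‖x‖) + 2)
          + ‖x‖ ^ 2 * (Real.exp ‖x‖ * Real.cos (Real.exp ‖x‖))) * ‖x‖⁻¹) • x) := by
  set D : ℝ := 2 * ‖x‖ * (Real.sin (Real.exp ‖x‖) + 2)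
      + ‖x‖ ^ 2 * (Real.exp ‖x‖ * Real.cos (Real.exp ‖x‖)) with hD
  have h := (phi_hasDerivAt_aux ‖x‖).comp_hasFDerivAt x (norm_hasFDerivAt_aux x hx)
  have h' : HasGradientAt (fun y : E2 => ‖y‖ ^ 2 * (Real.sin (Real.exp ‖y‖) + 2) + 1)
      ((D * ‖x‖⁻¹) • x) x := by
    rw [hasGradientAt_iff_hasFDerivAt]
    refine h.congr_fderiv ?_
    symm
    ext v
    simp only [InnerProductSpace.toDual_apply_apply, ContinuousLinearMap.smul_apply, innerSL_apply_apply,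
      real_inner_smul_left, smul_eq_mul]
    ring
  exact h'.gradient

theorem stmt_5 :
    ∃ x : ℕ → EuclideanSpace ℝ (Fin 2),
      Tendsto (fun n => ‖x n‖) atTop atTop ∧
      Tendsto (fun n =>
        ‖gradient (fun y : EuclideanSpace ℝ (Fin 2) =>
            ‖y‖ ^ 2 * (Real.sin (Real.exp ‖y‖) + 2) + 1) (x n)‖ /
          (‖x n‖ ^ 2 * (Real.sin (Real.exp ‖x n‖) + 2) + 1) ^ ((3 : ℝ) / 2))
        atTop atTop := by
  set r : ℕ → ℝ := fun n => Real.log ((n + 1) * (2 * Real.pi)) with hrdef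
  have hpos : ∀ n : ℕ, (0 : ℝ) < ((n : ℝ) + 1) * (2 * Real.pi) := by
    intro n; positivity
  have hexp : ∀ n, Real.exp (r n) = ((n : ℝ) + 1) * (2 * Real.pi) :=
    fun n => Real.exp_log (hpos n)
  have hr1 : ∀ n, 1 ≤ r n := by
    intro n
    rw [hrdef]
    rw [Real.le_log_iff_exp_le (hpos n)]
    calc Real.exp 1 ≤ 2 * Real.pi := by
          nlinarith [Real.exp_one_lt_d9, Real.pi_gt_three]
      _ ≤ ((n : ℝ) + 1) * (2 * Real.pi) := by
          nlinarith [Real.pi_gt_three, (Nat.cast_nonneg n : (0:ℝ) ≤ n)]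
  have hrpos : ∀ n, 0 < r n := fun n => lt_of_lt_of_le one_pos (hr1 n)
  -- the sequence
  refine ⟨fun n => EuclideanSpace.single (0 : Fin 2) (r n), ?_, ?_⟩
  · -- tendsto of norms
    have hrt : Tendsto r atTop atTop := by
      apply Real.tendsto_log_atTop.comp
      apply Tendsto.atTop_mul_const (by positivity : (0:ℝ) < 2 * Real.pi)
      exact tendsto_atTop_add_const_right atTop 1 tendsto_natCast_atTop_atTop
    refine hrt.congr fun n => ?_
    rw [EuclideanSpace.norm_single, Real.norm_eq_abs, abs_of_pos (hrpos n)]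
  · -- key identities
    have hnorm : ∀ n, ‖EuclideanSpace.single (0 : Fin 2) (r n)‖ = r n := by
      intro n
      rw [EuclideanSpace.norm_single, Real.norm_eq_abs, abs_of_pos (hrpos n)]
    have hsin : ∀ n, Real.sin (Real.exp (r n)) = 0 := by
      intro n
      rw [hexp]
      have : ((n : ℝ) + 1) * (2 * Real.pi) = ((2 * (n + 1) : ℕ) : ℝ) * Real.pi := by
        push_cast; ring
      rw [this, Real.sin_nat_mul_pi]
    have hcos : ∀ n, Real.cos (Real.exp (r n)) = 1 := by
      intro n
      rw [hexp]
      have : ((n : ℝ) + 1) * (2 * Real.pi) = (((n + 1 : ℕ)) : ℝ) * (2 * Real.pi) := by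
        push_cast; ring
      rw [this, Real.cos_nat_mul_two_pi]
    have hxne : ∀ n, (EuclideanSpace.single (0 : Fin 2) (r n) : E2) ≠ 0 := by
      intro n h
      have := hnorm n
      rw [h, norm_zero] at this
      exact (hrpos n).ne this
    have key : ∀ n,
        ‖gradient (fun y : E2 => ‖y‖ ^ 2 * (Real.sin (Real.exp ‖y‖) + 2) + 1)
            (EuclideanSpace.single (0 : Fin 2) (r n))‖ /
          (‖EuclideanSpace.single (0 : Fin 2) (r n)‖ ^ 2 *
            (Real.sin (Real.exp ‖EuclideanSpace.single (0 : Fin 2) (r n)‖) + 2) + 1)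
            ^ ((3 : ℝ) / 2)
        = (4 * r n + (r n) ^ 2 * Real.exp (r n)) / (2 * (r n) ^ 2 + 1) ^ ((3 : ℝ) / 2) := by
      intro n
      rw [grad_V_aux _ (hxne n)]
      rw [norm_smul, hnorm n, hsin n, hcos n]
      have hD : (2 * r n * (0 + 2) + (r n) ^ 2 * (Real.exp (r n) * 1))
          = 4 * r n + (r n) ^ 2 * Real.exp (r n) := by ring
      have hDpos : 0 < 4 * r n + (r n) ^ 2 * Real.exp (r n) := by
        have := hrpos n
        have := Real.exp_pos (r n)
        positivity
      rw [hD, Real.norm_eq_abs, abs_of_pos]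
      · rw [mul_assoc, inv_mul_cancel₀ (hrpos n).ne', mul_one]
        ring_nf
      · exact mul_pos hDpos (inv_pos.mpr (hrpos n))
    have hrt : Tendsto r atTop atTop := by
      apply Real.tendsto_log_atTop.comp
      apply Tendsto.atTop_mul_const (by positivity : (0:ℝ) < 2 * Real.pi)
      exact tendsto_atTop_add_const_right atTop 1 tendsto_natCast_atTop_atTop
    have hlow : Tendsto (fun n => Real.exp (r n) / r n / 27) atTop atTop := by
      apply Tendsto.atTop_div_const (by norm_num : (0:ℝ) < 27)
      have := (Real.tendsto_exp_div_pow_atTop 1).comp hrt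
      simpa [Function.comp_def] using this
    refine tendsto_atTop_mono ?_ hlow
    intro n
    rw [key n]
    set t := r n with ht
    have h1 : (1:ℝ) ≤ t := hr1 n
    have htpos : (0:ℝ) < t := hrpos n
    have hden_le : (2 * t ^ 2 + 1) ^ ((3:ℝ)/2) ≤ 27 * t ^ 3 := by
      have h9 : (2 * t ^ 2 + 1 : ℝ) ≤ (3 * t) ^ 2 := by nlinarith
      have h2 : (2 * t ^ 2 + 1 : ℝ) ^ ((3:ℝ)/2) ≤ ((3 * t) ^ 2 : ℝ) ^ ((3:ℝ)/2) := by
        apply Real.rpow_le_rpow (by positivity) h9 (by norm_num)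
      have h3 : ((3 * t) ^ 2 : ℝ) ^ ((3:ℝ)/2) = (3 * t) ^ (3 : ℕ) := by
        rw [← Real.rpow_natCast (3 * t) 2, ← Real.rpow_mul (by positivity)]
        norm_num
      calc (2 * t ^ 2 + 1 : ℝ) ^ ((3:ℝ)/2) ≤ (3 * t) ^ (3 : ℕ) := h2.trans_eq h3
        _ = 27 * t ^ 3 := by ring
    have hdenpos : (0:ℝ) < (2 * t ^ 2 + 1) ^ ((3:ℝ)/2) := by positivity
    have hstep : t ^ 2 * Real.exp t / (27 * t ^ 3)
        ≤ (4 * t + t ^ 2 * Real.exp t) / (2 * t ^ 2 + 1) ^ ((3:ℝ)/2) := by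
      apply div_le_div₀ (by positivity) (by nlinarith [Real.exp_pos t]) hdenpos hden_le
    have heq : Real.exp t / t / 27 = t ^ 2 * Real.exp t / (27 * t ^ 3) := by
      field_simp
    rw [heq]
    exact hstep

end
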